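/- (Theorem 3, Heisenberg uncertainty relations) Define ⟨Δx⟩² := (1/16)·Σ_{n=4q}^{4q+3} Σ_{j=1}^{4} ((r^j_n − r̃_n)_x)² and ⟨Δp_x⟩² := (1/16)·Σ_{n=4q}^{4q+3} Σ_{j=1}^{4} ((p^j_n − mṽ)_x)². Then for every ε > 0 and for both s = s⁺ and s = s⁻: ⟨Δx⟩² = ℏε/(2m), ⟨Δp_x⟩² = ℏm/(2ε), and hence the product of standard deviations satisfies ⟨Δx⟩·⟨Δp_x⟩ = ℏ/2. -/

import Mathlib

noncomputable section

open Finset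

open Fin.NatCast

/-- The four vertices of the unit square in `ℝ²`. -/
def uR : Fin 4 → EuclideanSpace ℝ (Fin 2) :=
  ![(WithLp.equiv 2 (Fin 2 → ℝ)).symm ![1, 1],
    (WithLp.equiv 2 (Fin 2 → ℝ)).symm ![1, -1],
    (WithLp.equiv 2 (Fin 2 → ℝ)).symm ![-1, -1],
    (WithLp.equiv 2 (Fin 2 → ℝ)).symm ![-1, 1]]

/-- `sPlusIter n j = (s⁺)ⁿ u^j` for the cyclic permutation `s⁺` with
`s⁺u¹ = u², s⁺u² = u³, s⁺u³ = u⁴, s⁺u⁴ = u¹`. -/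
def sPlusIter (n : ℕ) (j : Fin 4) : EuclideanSpace ℝ (Fin 2) := uR (j + (n : Fin 4))

/-- `sMinusIter n j = (s⁻)ⁿ u^j` for the inverse permutation `s⁻`. -/
def sMinusIter (n : ℕ) (j : Fin 4) : EuclideanSpace ℝ (Fin 2) := uR (j - (n : Fin 4))

/-- Theorem 3, Heisenberg uncertainty relations: with
`⟨Δx⟩² = (1/16) Σ_{n=4q}^{4q+3} Σ_j ((r^j_n − r̃_n)_x)²` and
`⟨Δp_x⟩² = (1/16) Σ_{n=4q}^{4q+3} Σ_j ((p^j_n − mṽ)_x)²`, for every `ε > 0` and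
both permutations `s⁺, s⁻` one has `⟨Δx⟩² = ℏε/(2m)`, `⟨Δp_x⟩² = ℏm/(2ε)` and
`⟨Δx⟩ ⟨Δp_x⟩ = ℏ/2`. -/
theorem heisenberg_uncertainty_relations
    (ℏ m ε : ℝ) (hℏ : 0 < ℏ) (hm : 0 < m) (hε : 0 < ε)
    (q : ℕ) (vt rt0 : EuclideanSpace ℝ (Fin 2))
    (rt : ℕ → EuclideanSpace ℝ (Fin 2))
    (hrt : ∀ n, rt n = rt0 + ((n : ℝ) * ε) • vt)
    (rP rM pP pM : Fin 4 → ℕ → EuclideanSpace ℝ (Fin 2))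
    (hrP : ∀ j n, rP j n = rt n + Real.sqrt (ℏ * ε / (4 * m)) • (sPlusIter n j - uR j))
    (hrM : ∀ j n, rM j n = rt n + Real.sqrt (ℏ * ε / (4 * m)) • (sMinusIter n j - uR j))
    (hpP : ∀ j n, pP j n = (m / ε) • (rP j (n + 1) - rP j n))
    (hpM : ∀ j n, pM j n = (m / ε) • (rM j (n + 1) - rM j n))
    (Δx2P Δp2P Δx2M Δp2M : ℝ)
    (hΔx2P : Δx2P = (1 / 16 : ℝ) * ∑ k ∈ Finset.range 4, ∑ j : Fin 4,
      ((rP j (4 * q + k) - rt (4 * q + k)) 0) ^ 2)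
    (hΔp2P : Δp2P = (1 / 16 : ℝ) * ∑ k ∈ Finset.range 4, ∑ j : Fin 4,
      ((pP j (4 * q + k) - m • vt) 0) ^ 2)
    (hΔx2M : Δx2M = (1 / 16 : ℝ) * ∑ k ∈ Finset.range 4, ∑ j : Fin 4,
      ((rM j (4 * q + k) - rt (4 * q + k)) 0) ^ 2)
    (hΔp2M : Δp2M = (1 / 16 : ℝ) * ∑ k ∈ Finset.range 4, ∑ j : Fin 4,
      ((pM j (4 * q + k) - m • vt) 0) ^ 2) :
    Δx2P = ℏ * ε / (2 * m) ∧ Δp2P = ℏ * m / (2 * ε)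
    ∧ Real.sqrt Δx2P * Real.sqrt Δp2P = ℏ / 2
    ∧ Δx2M = ℏ * ε / (2 * m) ∧ Δp2M = ℏ * m / (2 * ε)
    ∧ Real.sqrt Δx2M * Real.sqrt Δp2M = ℏ / 2 := by
  have hnn : (0:ℝ) ≤ ℏ * ε / (4 * m) := by positivity
  set a := Real.sqrt (ℏ * ε / (4 * m)) with ha
  have ha2 : a ^ 2 = ℏ * ε / (4 * m) := Real.sq_sqrt hnn
  have e1 : (-1 : Fin 4) = 3 := by decide
  have e2 : (-2 : Fin 4) = 2 := by decide
  have e3 : (-3 : Fin 4) = 1 := by decide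
  have hcast : ∀ k : ℕ, ((4 * q + k : ℕ) : Fin 4) = (k : Fin 4) := by
    intro k; push_cast; simp
  have hxP : ∀ (j : Fin 4) (n : ℕ),
      (rP j n - rt n) 0 = a * (uR (j + (n : Fin 4)) 0 - uR j 0) := by
    intro j n
    simp [hrP, sPlusIter, PiLp.add_apply, PiLp.sub_apply, PiLp.smul_apply, smul_eq_mul]
    try ring
  have hxM : ∀ (j : Fin 4) (n : ℕ),
      (rM j n - rt n) 0 = a * (uR (j - (n : Fin 4)) 0 - uR j 0) := by
    intro j n
    simp [hrM, sMinusIter, PiLp.add_apply, PiLp.sub_apply, PiLp.smul_apply, smul_eq_mul]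
    try ring
  have hpX : ∀ (j : Fin 4) (n : ℕ),
      (pP j n - m • vt) 0
        = (m / ε) * a * (uR (j + ((n:Fin 4) + 1)) 0 - uR (j + (n : Fin 4)) 0) := by
    intro j n
    simp [hpP, hrP, hrt, sPlusIter, PiLp.add_apply, PiLp.sub_apply, PiLp.smul_apply,
      smul_eq_mul, Nat.cast_add, Nat.cast_one]
    push_cast
    field_simp
    ring
  have hpY : ∀ (j : Fin 4) (n : ℕ),
      (pM j n - m • vt) 0
        = (m / ε) * a * (uR (j - ((n:Fin 4) + 1)) 0 - uR (j - (n : Fin 4)) 0) := by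
    intro j n
    simp [hpM, hrM, hrt, sMinusIter, PiLp.add_apply, PiLp.sub_apply, PiLp.smul_apply,
      smul_eq_mul, Nat.cast_add, Nat.cast_one]
    push_cast
    field_simp
    ring
  have hXP : Δx2P = 2 * a ^ 2 := by
    rw [hΔx2P]
    simp only [Finset.sum_range_succ, Finset.sum_range_zero, Fin.sum_univ_four, hxP, hcast]
    simp [uR, e1, e2, e3]
    try ring
  have hXM : Δx2M = 2 * a ^ 2 := by
    rw [hΔx2M]
    simp only [Finset.sum_range_succ, Finset.sum_range_zero, Fin.sum_univ_four, hxM, hcast]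
    simp [uR, e1, e2, e3]
    try ring
  have hPP : Δp2P = 2 * (m / ε) ^ 2 * a ^ 2 := by
    rw [hΔp2P]
    simp only [Finset.sum_range_succ, Finset.sum_range_zero, Fin.sum_univ_four, hpX, hcast]
    simp [uR, e1, e2, e3]
    try ring
  have hPM : Δp2M = 2 * (m / ε) ^ 2 * a ^ 2 := by
    rw [hΔp2M]
    simp only [Finset.sum_range_succ, Finset.sum_range_zero, Fin.sum_univ_four, hpY, hcast]
    simp [uR, e1, e2, e3]
    try ring
  have hx : Δx2P = ℏ * ε / (2 * m) := by rw [hXP, ha2]; field_simp; ring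
  have hp : Δp2P = ℏ * m / (2 * ε) := by rw [hPP, ha2]; field_simp; ring
  have hxm : Δx2M = ℏ * ε / (2 * m) := by rw [hXM, ha2]; field_simp; ring
  have hpm : Δp2M = ℏ * m / (2 * ε) := by rw [hPM, ha2]; field_simp; ring
  have hprod : Real.sqrt (ℏ * ε / (2 * m)) * Real.sqrt (ℏ * m / (2 * ε)) = ℏ / 2 := by
    rw [← Real.sqrt_mul (by positivity)]
    have : ℏ * ε / (2 * m) * (ℏ * m / (2 * ε)) = (ℏ / 2) ^ 2 := by
      field_simp
    rw [this, Real.sqrt_sq (by positivity)]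
  exact ⟨hx, hp, by rw [hx, hp, hprod], hxm, hpm, by rw [hxm, hpm, hprod]⟩
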